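/- If 1 ≤ k₁, n·k₁ ≤ m, and ⌊(m - n·k₁)/2⌋ ≤ k₂ - k₁ < m - n·k₁, then the number of functions f : Fin n → ℕ with ∑ f i = m and k₁ ≤ f i ≤ k₂ for all i equals C(m - n·k₁ + n - 1, n-1) - n · C(m - n·k₁ - (k₂ - k₁) + n - 2, n-1). -/

import Mathlib

theorem sb (k M : ℕ) : (Finset.Nat.antidiagonalTuple (k+1) M).card = (M + k).choose k := by
  induction k generalizing M with
  | zero => simp
  | succ k ih =>
    have hlen : (Finset.Nat.antidiagonalTuple (k+1+1) M).card
        = ((List.Nat.antidiagonal M).flatMap fun ni =>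
            (List.Nat.antidiagonalTuple (k+1) ni.2).map
              fun x : Fin (k+1) → ℕ => (Fin.cons ni.1 x : Fin (k+2) → ℕ)).length := rfl
    rw [hlen, List.length_flatMap, List.Nat.antidiagonal, List.map_map]
    have he : ((List.length ∘ fun ni : ℕ × ℕ =>
          List.map (fun x : Fin (k+1) → ℕ => (Fin.cons ni.1 x : Fin (k+2) → ℕ))
            (List.Nat.antidiagonalTuple (k+1) ni.2)) ∘ fun i => (i, M - i))
        = fun i => (M - i + k).choose k := by
      funext i
      simp only [Function.comp, List.length_map]
      exact ih (M - i)
    rw [show ((fun a : ℕ × ℕ => (List.map (fun x : Fin (k+1) → ℕ => (Fin.cons a.1 x : Fin (k+2) → ℕ)) (List.Nat.antidiagonalTuple (k+1) a.2)).length) ∘ fun i => (i, M - i)) = fun i => (M - i + k).choose k from he]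
    have hr : ((List.range (M+1)).map fun i => (M - i + k).choose k).sum
        = ∑ i ∈ Finset.range (M+1), (M - i + k).choose k := rfl
    rw [hr]
    have h3 : ∑ i ∈ Finset.range (M+1), (M - i + k).choose k
        = ∑ j ∈ Finset.range (M+1), (j + k).choose k := by
      rw [← Finset.sum_range_reflect (fun j => (j + k).choose k) (M+1)]
      exact Finset.sum_congr rfl fun i hi => by simp
    rw [h3, Nat.sum_range_add_choose M k, ← Nat.add_assoc]

theorem stmt_16 (m n k₁ k₂ : ℕ) (hn : 2 ≤ n) (hk1 : 1 ≤ k₁) (hm : n * k₁ ≤ m)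
    (hk : k₁ ≤ k₂) (h1 : (m - n * k₁) / 2 ≤ k₂ - k₁) (h2 : k₂ - k₁ < m - n * k₁) :
    ({f : Fin n → ℕ | (∑ i, f i = m) ∧ ∀ i, k₁ ≤ f i ∧ f i ≤ k₂}.ncard : ℤ)
      = (m - n * k₁ + n - 1).choose (n - 1)
        - n * (m - n * k₁ - (k₂ - k₁) + n - 2).choose (n - 1) := by
  obtain ⟨n', rfl⟩ : ∃ n', n = n' + 1 := ⟨n - 1, by omega⟩
  set M := m - (n' + 1) * k₁ with hM
  set t := k₂ - k₁ with ht
  set A : Finset (Fin (n'+1) → ℕ) := Finset.Nat.antidiagonalTuple (n'+1) M with hA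
  set T : Finset (Fin (n'+1) → ℕ) :=
    (Finset.Nat.antidiagonalTuple (n'+1) m).filter (fun f => ∀ i, k₁ ≤ f i ∧ f i ≤ k₂) with hT
  set U : Finset (Fin (n'+1) → ℕ) := A.filter (fun g => ∀ i, g i ≤ t) with hU
  have hS : {f : Fin (n'+1) → ℕ | (∑ i, f i = m) ∧ ∀ i, k₁ ≤ f i ∧ f i ≤ k₂} = ↑T := by
    ext f
    simp [hT, Finset.Nat.mem_antidiagonalTuple]
  rw [hS, Set.ncard_coe_finset]
  have key : ∀ g : Fin (n'+1) → ℕ, ∑ i, (g i + k₁) = (∑ i, g i) + (n'+1) * k₁ := by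
    intro g
    rw [Finset.sum_add_distrib, Finset.sum_const, Finset.card_univ]
    simp [mul_comm]
  have hTU : T.card = U.card := by
    refine Finset.card_bij' (fun f _ => fun j => f j - k₁) (fun g _ => fun j => g j + k₁)
      ?_ ?_ ?_ ?_
    · intro f hf
      simp only [hT, Finset.mem_filter, Finset.Nat.mem_antidiagonalTuple] at hf
      simp only [hU, Finset.mem_filter, hA, Finset.Nat.mem_antidiagonalTuple]
      have hkey : ∑ i, ((f i - k₁) + k₁) = (∑ i, (f i - k₁)) + (n'+1) * k₁ := key _
      have he : ∀ j : Fin (n'+1), f j - k₁ + k₁ = f j := fun j => by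
        have := (hf.2 j).1; omega
      simp only [he] at hkey
      refine ⟨by omega, fun i => ?_⟩
      have h5 := (hf.2 i).2
      have h6 := (hf.2 i).1
      show f i - k₁ ≤ t
      omega
    · intro g hg
      simp only [hU, Finset.mem_filter, hA, Finset.Nat.mem_antidiagonalTuple] at hg
      simp only [hT, Finset.mem_filter, Finset.Nat.mem_antidiagonalTuple]
      refine ⟨by rw [key]; omega, fun i => ?_⟩
      have := hg.2 i
      exact ⟨by omega, by show g i + k₁ ≤ k₂; omega⟩
    · intro f hf
      simp only [hT, Finset.mem_filter] at hf
      funext j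
      have := (hf.2 j).1
      show f j - k₁ + k₁ = f j
      omega
    · intro g hg
      funext j
      show g j + k₁ - k₁ = g j
      omega
  rw [hTU]
  set V : Finset (Fin (n'+1) → ℕ) := A.filter (fun g => ¬ ∀ i, g i ≤ t) with hV
  have hUV : U.card + V.card = A.card := Finset.card_filter_add_card_filter_not _
  have hVb : V = Finset.univ.biUnion (fun i : Fin (n'+1) => A.filter (fun g => t + 1 ≤ g i)) := by
    ext g
    simp only [hV, Finset.mem_filter, Finset.mem_biUnion, Finset.mem_univ, true_and, not_forall]
    constructor
    · rintro ⟨hg, i, hi⟩; exact ⟨i, hg, by omega⟩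
    · rintro ⟨i, hg, hi⟩; exact ⟨hg, i, by omega⟩
  have hsum_pair : ∀ (g : Fin (n'+1) → ℕ) (i j : Fin (n'+1)), i ≠ j →
      g i + g j ≤ ∑ x, g x := by
    intro g i j hij
    have h := Finset.sum_le_sum_of_subset (Finset.subset_univ ({i, j} : Finset (Fin (n'+1))))
      (f := g)
    rwa [Finset.sum_pair hij] at h
  have hdisj : ∀ i ∈ (Finset.univ : Finset (Fin (n'+1))), ∀ j ∈ Finset.univ, i ≠ j →
      Disjoint (A.filter (fun g => t + 1 ≤ g i)) (A.filter (fun g => t + 1 ≤ g j)) := by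
    intro i _ j _ hij
    rw [Finset.disjoint_left]
    intro g hgi hgj
    simp only [Finset.mem_filter, hA, Finset.Nat.mem_antidiagonalTuple] at hgi hgj
    have := hsum_pair g i j hij
    omega
  have hupd : ∀ (h : Fin (n'+1) → ℕ) (i : Fin (n'+1)) (b : ℕ),
      ∑ x, Function.update h i b x = b + (∑ x, h x) - h i := by
    intro h i b
    have h4 := Finset.sum_eq_sum_sdiff_singleton_add (Finset.mem_univ i) h
    rw [Finset.sum_update_of_mem (Finset.mem_univ i)]
    omega
  have hsingle : ∀ (g : Fin (n'+1) → ℕ) (i : Fin (n'+1)), g i ≤ ∑ x, g x := by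
    intro g i
    exact Finset.single_le_sum (fun _ _ => Nat.zero_le _) (Finset.mem_univ i)
  have hpiece : ∀ i : Fin (n'+1), (A.filter (fun g => t + 1 ≤ g i)).card
      = (M - (t+1) + n').choose n' := by
    intro i
    rw [← sb n' (M - (t+1))]
    refine Finset.card_bij' (fun g _ => Function.update g i (g i - (t+1)))
      (fun h _ => Function.update h i (h i + (t+1))) ?_ ?_ ?_ ?_
    · intro g hg
      simp only [Finset.mem_filter, hA, Finset.Nat.mem_antidiagonalTuple] at hg
      rw [Finset.Nat.mem_antidiagonalTuple, hupd]
      have := hsingle g i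
      omega
    · intro h hh
      rw [Finset.Nat.mem_antidiagonalTuple] at hh
      simp only [Finset.mem_filter, hA, Finset.Nat.mem_antidiagonalTuple]
      constructor
      · rw [hupd]
        have := hsingle h i
        omega
      · simp [Function.update_self]
    · intro g hg
      simp only [Finset.mem_filter] at hg
      simp only [Function.update_self, Function.update_idem]
      have hx : g i - (t+1) + (t+1) = g i := by omega
      rw [hx, Function.update_eq_self]
    · intro h hh
      simp only [Function.update_self, Function.update_idem]
      have hx : h i + (t+1) - (t+1) = h i := by omega
      rw [hx, Function.update_eq_self]
  have hVcard : V.card = (n'+1) * (M - (t+1) + n').choose n' := by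
    rw [hVb, Finset.card_biUnion hdisj]
    simp only [hpiece]
    rw [Finset.sum_const, Finset.card_univ]
    simp [mul_comm]
  have hAcard : A.card = (M + n').choose n' := sb n' M
  have e1 : M + (n' + 1) - 1 = M + n' := by omega
  have e2 : M - t + (n' + 1) - 2 = M - (t+1) + n' := by omega
  have e3 : n' + 1 - 1 = n' := by omega
  rw [e1, e2, e3]
  have hcard : (U.card : ℤ) = (A.card : ℤ) - (V.card : ℤ) := by omega
  rw [hcard, hAcard, hVcard]
  push_cast
  ring
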